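/- Let τ_{1/2} > 0 and define recursively δ_n = δ(τ_{n−1}) with δ(τ) = 1 + √(1+2τ) (for n < N) or (1+√(1+4τ))/2 (for n = N), τ_n = τ_{n−1} + δ_n, η_n = 1/(2 τ_{1/2} δ_n), and η_i = (1 + Σ_{j=n}^{i−1} δ_j² η_j)/(2 τ_{i−1} δ_i) for i > n. Then for all i in [n, N], δ_{i+1} η_{i+1} = (δ_i − 1) η_i (for i < N). -/

import Mathlib

theorem eta_telescoping (N n : ℕ) (hnN : n ≤ N) (τhalf : ℝ) (hτ : 0 < τhalf)
    (δ τ η : ℕ → ℝ)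
    (hδ : ∀ i, n ≤ i → i ≤ N →
      δ i = if i < N then 1 + Real.sqrt (1 + 2 * (if i = n then τhalf else τ (i - 1)))
            else (1 + Real.sqrt (1 + 4 * (if i = n then τhalf else τ (i - 1)))) / 2)
    (hτrec : ∀ i, n ≤ i → i ≤ N →
      τ i = (if i = n then τhalf else τ (i - 1)) + δ i)
    (hηn : η n = 1 / (2 * τhalf * δ n))
    (hηi : ∀ i, n < i → i ≤ N →
      η i = (1 + ∑ j ∈ Finset.Ico n i, (δ j) ^ 2 * η j) / (2 * τ (i - 1) * δ i)) :
    ∀ i, n ≤ i → i < N → δ (i + 1) * η (i + 1) = (δ i - 1) * η i := by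
  have hδpos : ∀ i, n ≤ i → i ≤ N → 0 < δ i := by
    intro i h1 h2
    rw [hδ i h1 h2]
    split <;> positivity
  have hτpos : ∀ i, n ≤ i → i ≤ N → 0 < τ i := by
    intro i h1
    induction i, h1 using Nat.le_induction with
    | base => intro h2; rw [hτrec n le_rfl h2, if_pos rfl]
              exact add_pos hτ (hδpos n le_rfl h2)
    | succ m hm ih =>
      intro h2
      have hmN : m ≤ N := le_of_lt (Nat.lt_of_succ_le h2)
      rw [hτrec (m+1) (by omega) h2, if_neg (by omega : ¬ m + 1 = n)]
      simp only [Nat.add_sub_cancel]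
      exact add_pos (ih hmN) (hδpos (m+1) (by omega) h2)
  have hprev : ∀ i, n ≤ i → i ≤ N → 0 < (if i = n then τhalf else τ (i - 1)) := by
    intro i h1 h2
    split
    · exact hτ
    · exact hτpos (i-1) (by omega) (by omega)
  have hkey : ∀ i, n ≤ i → i < N → δ i ^ 2 = 2 * τ i := by
    intro i h1 h2
    have hp := hprev i h1 (le_of_lt h2)
    have hs : Real.sqrt (1 + 2 * (if i = n then τhalf else τ (i - 1))) ^ 2
        = 1 + 2 * (if i = n then τhalf else τ (i - 1)) :=
      Real.sq_sqrt (by linarith)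
    rw [hδ i h1 (le_of_lt h2), if_pos h2, hτrec i h1 (le_of_lt h2),
      hδ i h1 (le_of_lt h2), if_pos h2]
    nlinarith [hs]
  intro i hni hiN
  have hi1N : i + 1 ≤ N := hiN
  have hδi := hδpos i hni (le_of_lt hiN)
  have hδi1 := hδpos (i+1) (by omega) hi1N
  have hτi := hτpos i hni (le_of_lt hiN)
  have hki := hkey i hni hiN
  have hη1 := hηi (i+1) (by omega) hi1N
  simp only [Nat.add_sub_cancel] at hη1
  rw [Finset.sum_Ico_succ_top hni] at hη1
  have hδine : δ i ≠ 0 := ne_of_gt hδi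
  have hδi1ne : δ (i+1) ≠ 0 := ne_of_gt hδi1
  rcases eq_or_lt_of_le hni with heq | hlt
  · -- i = n
    subst heq
    rw [Finset.Ico_self, Finset.sum_empty] at hη1
    have hτn : τ n = τhalf + δ n := by
      rw [hτrec n le_rfl (le_of_lt hiN), if_pos rfl]
    have ht : τ n = δ n ^ 2 / 2 := by linarith
    have hth : τhalf = (δ n ^ 2 - 2 * δ n) / 2 := by linarith
    have hne : δ n ^ 2 - 2 * δ n ≠ 0 := by
      intro h; rw [hth] at hτ; linarith
    rw [hη1, hηn, ht, hth]
    have hne2 : δ n - 2 ≠ 0 := fun h => hne (by linear_combination δ n * h)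
    field_simp
    ring
  · -- i > n
    have hηie := hηi i hlt (le_of_lt hiN)
    have hτim := hτpos (i-1) (by omega) (by omega)
    have hτrel : δ i ^ 2 = 2 * τ (i-1) + 2 * δ i := by
      have := hτrec i hni (le_of_lt hiN)
      rw [if_neg (by omega)] at this
      nlinarith [hki]
    have ht : τ i = δ i ^ 2 / 2 := by linarith
    have ht' : τ (i-1) = (δ i ^ 2 - 2 * δ i) / 2 := by linarith
    have hne : δ i ^ 2 - 2 * δ i ≠ 0 := by
      intro h; rw [ht'] at hτim; linarith
    rw [hηie] at hη1
    rw [hη1, hηie, ht, ht']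
    have hne2 : δ i - 2 ≠ 0 := fun h => hne (by linear_combination δ i * h)
    field_simp
    ring
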